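/- Let F be an algebraically closed field, let g be an abelian Lie algebra over F, and let V be a uniserial g-module of finite dimension m. Then there exists x ∈ g whose action u on V satisfies (u − α·id)^m = 0 and (u − α·id)^{m−1} ≠ 0 for some α ∈ F (that is, u is represented by the m×m Jordan block J_m(α) relative to some basis of V), and every element of g acts on V as a polynomial in u. -/

import Mathlib

open LieModule Polynomial Module

section Aux

variable {F : Type*} [Field F]
  {g : Type*} [LieRing g] [LieAlgebra F g]
  {V : Type*} [AddCommGroup V] [Module F V] [LieRingModule g V] [LieModule F g V]

lemma aux_comm (habelian : IsLieAbelian g) (y z : g) :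
    Commute (toEnd F g V y) (toEnd F g V z) := by
  have h0 : (⁅y, z⁆ : g) = 0 := habelian.trivial y z
  show toEnd F g V y * toEnd F g V z = toEnd F g V z * toEnd F g V y
  refine LinearMap.ext fun v => ?_
  have h := lie_lie y z v
  rw [h0, zero_lie] at h
  simp only [Module.End.mul_apply, toEnd_apply_apply]
  exact sub_eq_zero.mp h.symm

/-- bundle an invariant submodule as a Lie submodule -/
def invSub (p : Submodule F V) (hp : ∀ (z : g) (v : V), v ∈ p → toEnd F g V z v ∈ p) :
    LieSubmodule F g V where
  carrier := p
  add_mem' := p.add_mem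
  zero_mem' := p.zero_mem
  smul_mem' := fun c {x} hx => p.smul_mem c hx
  lie_mem := fun {z v} hv => hp z v hv

lemma aux_compare (huni2 : ∀ W₁ W₂ : LieSubmodule F g V, W₁ ≤ W₂ ∨ W₂ ≤ W₁)
    (p q : Submodule F V) (hp : ∀ (z : g) (v : V), v ∈ p → toEnd F g V z v ∈ p)
    (hq : ∀ (z : g) (v : V), v ∈ q → toEnd F g V z v ∈ q) : p ≤ q ∨ q ≤ p := by
  rcases huni2 (invSub p hp) (invSub q hq) with h | h
  · exact Or.inl fun v hv => h hv
  · exact Or.inr fun v hv => h hv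

lemma aux_max {ι : Type*} [Nonempty ι] (f : ι → ℕ) (B : ℕ) (hB : ∀ i, f i ≤ B) :
    ∃ i, ∀ j, f j ≤ f i := by
  induction B with
  | zero => exact ⟨Classical.arbitrary ι, fun j => (hB j).trans (Nat.zero_le _)⟩
  | succ B ih =>
    by_cases h : ∃ i, f i = B + 1
    · obtain ⟨i, hi⟩ := h; exact ⟨i, fun j => hi ▸ hB j⟩
    · exact ih (fun i => Nat.lt_succ_iff.mp (lt_of_le_of_ne (hB i) (fun hh => h ⟨i, hh⟩)))

lemma aux_single_ev [IsAlgClosed F] [FiniteDimensional F V] (habelian : IsLieAbelian g)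
    (hnt : Nontrivial V) (huni2 : ∀ W₁ W₂ : LieSubmodule F g V, W₁ ≤ W₂ ∨ W₂ ≤ W₁)
    (y : g) : ∃ α : F, (toEnd F g V y - α • 1) ^ (finrank F V) = 0 := by
  set f := toEnd F g V y with hf
  obtain ⟨α, hα⟩ := Module.End.exists_eigenvalue f
  refine ⟨α, ?_⟩
  have hinv : ∀ μ : F, ∀ (z : g) (v : V),
      v ∈ f.maxGenEigenspace μ → toEnd F g V z v ∈ f.maxGenEigenspace μ :=
    fun μ z v hv => Module.End.mapsTo_maxGenEigenspace_of_comm (aux_comm habelian y z) μ hv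
  have hbot : ∀ μ : F, μ ≠ α → f.maxGenEigenspace μ = ⊥ := by
    intro μ hμ
    have hdis : Disjoint (f.maxGenEigenspace μ) (f.maxGenEigenspace α) :=
      Module.End.disjoint_genEigenspace f hμ ⊤ ⊤
    rcases aux_compare huni2 _ _ (hinv μ) (hinv α) with h | h
    · exact hdis.eq_bot_of_le h
    · exfalso
      have hb : f.maxGenEigenspace α = ⊥ := hdis.symm.eq_bot_of_le h
      have : f.eigenspace α ≤ f.maxGenEigenspace α := (f.genEigenspace α).monotone le_top
      rw [hb, le_bot_iff] at this
      exact hα this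
  have htop : f.maxGenEigenspace α = ⊤ := by
    have hsup := Module.End.iSup_maxGenEigenspace_eq_top f
    rw [eq_top_iff, ← hsup]
    exact iSup_le fun μ => by
      by_cases h : μ = α
      · exact h ▸ le_rfl
      · rw [hbot μ h]; exact bot_le
  have h2 : f.maxGenEigenspace α = LinearMap.ker ((f - α • 1) ^ finrank F V) := by
    rw [Module.End.maxGenEigenspace_eq_genEigenspace_finrank, Module.End.genEigenspace_nat]
  rw [htop] at h2
  exact LinearMap.ker_eq_top.mp h2.symm

end Aux

/-- **Corollary (dernier), Lie case.** Let `F` be an algebraically closed field, `g` an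
abelian Lie algebra over `F`, and `V` a uniserial `g`-module of finite dimension `m`.
Then there is `x ∈ g` whose action `u` on `V` satisfies `(u - α·id)^m = 0` and
`(u - α·id)^(m-1) ≠ 0` for some `α ∈ F` (i.e. `u` is represented by the Jordan block
`J_m(α)` in a suitable basis), and every element of `g` acts on `V` as a polynomial
in `u`. -/
theorem stmt15 (F : Type*) [Field F] [IsAlgClosed F]
    (g : Type*) [LieRing g] [LieAlgebra F g] (habelian : IsLieAbelian g)
    (V : Type*) [AddCommGroup V] [Module F V] [LieRingModule g V] [LieModule F g V]
    [FiniteDimensional F V]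
    (huni : Nontrivial V ∧ ∀ W₁ W₂ : LieSubmodule F g V, W₁ ≤ W₂ ∨ W₂ ≤ W₁)
    (m : ℕ) (hm : Module.finrank F V = m) :
    ∃ (x : g) (α : F),
      (LieModule.toEnd F g V x - α • 1) ^ m = 0 ∧
      (LieModule.toEnd F g V x - α • 1) ^ (m - 1) ≠ 0 ∧
      ∀ y : g, ∃ q : Polynomial F,
        LieModule.toEnd F g V y = Polynomial.aeval (LieModule.toEnd F g V x) q := by
  obtain ⟨hnt, hchain⟩ := huni
  haveI := hnt
  haveI : Nonempty g := ⟨0⟩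
  have hm1 : 1 ≤ m := hm ▸ Module.finrank_pos
  have hev : ∀ y : g, ∃ α : F, (toEnd F g V y - α • 1) ^ m = 0 := by
    intro y
    obtain ⟨α, hα⟩ := aux_single_ev habelian hnt hchain y
    exact ⟨α, by rwa [hm] at hα⟩
  choose α hα using hev
  set N : g → Module.End F V := fun y => toEnd F g V y - α y • 1 with hN
  -- commutation facts
  have hTN : ∀ y z : g, Commute (toEnd F g V z) (N y) := fun y z =>
    Commute.sub_right (aux_comm habelian z y) ((Commute.one_right _).smul_right (α y))
  have hNN : ∀ y z : g, Commute (N y) (N z) := fun y z =>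
    Commute.sub_left (hTN z y) ((Commute.one_left _).smul_left (α y))
  -- invariance of ranges
  have hinvR : ∀ (x : g) (k : ℕ) (z : g) (v : V),
      v ∈ LinearMap.range (N x ^ k) → toEnd F g V z v ∈ LinearMap.range (N x ^ k) := by
    rintro x k z v ⟨w, hw⟩
    refine ⟨toEnd F g V z w, ?_⟩
    rw [← hw, ← Module.End.mul_apply, ← Module.End.mul_apply, ((hTN x z).pow_right k).eq]
  -- domination
  obtain ⟨x, hx⟩ := aux_max (fun y => finrank F (LinearMap.range (N y))) m
    (fun y => hm ▸ Submodule.finrank_le _)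
  have hdom : ∀ y, LinearMap.range (N y) ≤ LinearMap.range (N x) := by
    intro y
    have h1 := hinvR y 1; have h2 := hinvR x 1
    rw [pow_one] at h1 h2
    rcases aux_compare hchain _ _ h1 h2 with h | h
    · exact h
    · exact (Submodule.eq_of_le_of_finrank_le h (hx y)).ge
  set Vk : ℕ → Submodule F V := fun k => LinearMap.range (N x ^ k) with hVk
  have hr1 : LinearMap.range (1 : Module.End F V) = ⊤ :=
    LinearMap.range_eq_top.mpr fun v => ⟨v, rfl⟩
  have hVsucc : ∀ k, Vk (k + 1) = Submodule.map (N x) (Vk k) := by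
    intro k
    rw [hVk]
    simp only [pow_succ']
    rw [Module.End.mul_eq_comp, LinearMap.range_comp]
  have hmaple : ∀ (y : g) (k : ℕ), Submodule.map (N y) (Vk k) ≤ Vk (k + 1) := by
    intro y k
    induction k with
    | zero =>
      rw [hVsucc 0]
      have h0 : Vk 0 = ⊤ := by rw [hVk]; simpa using hr1
      rw [h0, Submodule.map_top, Submodule.map_top]
      exact hdom y
    | succ k ih =>
      rw [hVsucc k, ← Submodule.map_comp, ← Module.End.mul_eq_comp, (hNN y x).eq,
        Module.End.mul_eq_comp, Submodule.map_comp, hVsucc (k + 1)]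
      exact Submodule.map_mono ih
  -- each step drops dimension by at most 1
  have hinvVk : ∀ (k : ℕ) (z : g) (v : V), v ∈ Vk k → toEnd F g V z v ∈ Vk k :=
    fun k => hinvR x k
  have hdim : ∀ k, finrank F (Vk k) ≤ finrank F (Vk (k + 1)) + 1 := by
    intro k
    by_cases hle : Vk k ≤ Vk (k + 1)
    · exact (Submodule.finrank_mono hle).trans (Nat.le_succ _)
    · obtain ⟨w, hwk, hw1⟩ := SetLike.not_le_iff_exists.mp hle
      have hw0 : w ≠ 0 := fun h => hw1 (h ▸ (Vk (k + 1)).zero_mem)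
      -- invariance of Vk (k+1) ⊔ span {a} for a ∈ Vk k
      have hinvU : ∀ a : V, a ∈ Vk k → ∀ (z : g) (v : V),
          v ∈ Vk (k + 1) ⊔ Submodule.span F {a} →
          toEnd F g V z v ∈ Vk (k + 1) ⊔ Submodule.span F {a} := by
        intro a ha z v hv
        obtain ⟨u, hu, s, hs, rfl⟩ := Submodule.mem_sup.mp hv
        obtain ⟨c, rfl⟩ := Submodule.mem_span_singleton.mp hs
        rw [map_add]
        refine Submodule.add_mem _ (Submodule.mem_sup_left (hinvVk (k + 1) z u hu)) ?_
        rw [map_smul]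
        have hz : toEnd F g V z a = α z • a + N z a := by
          rw [hN]; simp only [LinearMap.sub_apply, LinearMap.smul_apply, Module.End.one_apply]
          abel
        rw [hz, smul_add]
        refine Submodule.add_mem _ ?_ ?_
        · exact Submodule.mem_sup_right (Submodule.smul_mem _ _
            (Submodule.smul_mem _ _ (Submodule.mem_span_singleton_self a)))
        · exact Submodule.mem_sup_left (Submodule.smul_mem _ _
            (hmaple z k ⟨a, ha, rfl⟩))
      have hwsub : Vk k ≤ Vk (k + 1) ⊔ Submodule.span F {w} := by
        intro w' hw'
        rcases aux_compare hchain (Vk (k + 1) ⊔ Submodule.span F {w})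
          (Vk (k + 1) ⊔ Submodule.span F {w'}) (hinvU w hwk) (hinvU w' hw') with h | h
        · have hw2 : w ∈ Vk (k + 1) ⊔ Submodule.span F {w'} :=
            h (Submodule.mem_sup_right (Submodule.mem_span_singleton_self w))
          obtain ⟨u, hu, s, hs, hws⟩ := Submodule.mem_sup.mp hw2
          obtain ⟨c, rfl⟩ := Submodule.mem_span_singleton.mp hs
          have hc : c ≠ 0 := by
            rintro rfl
            exact hw1 (by rw [← hws]; simpa using hu)
          have : w' = c⁻¹ • (w - u) := by
            rw [← hws]; simp [smul_smul, inv_mul_cancel₀ hc]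
          rw [this]
          exact Submodule.smul_mem _ _ (Submodule.sub_mem _
            (Submodule.mem_sup_right (Submodule.mem_span_singleton_self w))
            (Submodule.mem_sup_left hu))
        · exact h (Submodule.mem_sup_right (Submodule.mem_span_singleton_self w'))
      calc finrank F (Vk k) ≤ finrank F ↥(Vk (k + 1) ⊔ Submodule.span F {w}) :=
            Submodule.finrank_mono hwsub
        _ ≤ finrank F (Vk (k + 1)) + finrank F (Submodule.span F {w}) :=
            Submodule.finrank_add_le_finrank_add_finrank _ _
        _ = finrank F (Vk (k + 1)) + 1 := by rw [finrank_span_singleton hw0]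
  have hlow : ∀ k, m ≤ finrank F (Vk k) + k := by
    intro k
    induction k with
    | zero =>
      have h0 : Vk 0 = ⊤ := by rw [hVk]; simpa using hr1
      rw [h0]
      simp [finrank_top, hm]
    | succ k ih =>
      calc m ≤ finrank F (Vk k) + k := ih
        _ ≤ (finrank F (Vk (k + 1)) + 1) + k := Nat.add_le_add_right (hdim k) k
        _ = finrank F (Vk (k + 1)) + (k + 1) := by omega
  have hne : (N x) ^ (m - 1) ≠ 0 := by
    intro h
    have h1 := hlow (m - 1)
    have h2 : Vk (m - 1) = ⊥ := by rw [hVk]; simp only [h, LinearMap.range_zero]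
    rw [h2, finrank_bot] at h1
    omega
  -- cyclic vector
  obtain ⟨v, hv⟩ : ∃ v : V, (N x ^ (m - 1)) v ≠ 0 := by
    by_contra h
    push_neg at h
    exact hne (LinearMap.ext fun w => by simpa using h w)
  haveI : Nonempty (Fin m) := ⟨⟨0, hm1⟩⟩
  have hNm : N x ^ m = 0 := hα x
  have li : LinearIndependent F (fun i : Fin m => (N x ^ (i : ℕ)) v) := by
    rw [Fintype.linearIndependent_iff]
    intro c hc
    suffices H : ∀ n : ℕ, ∀ i : Fin m, (i : ℕ) = n → c i = 0 by
      exact fun i => H i i rfl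
    intro n
    induction n using Nat.strong_induction_on with
    | _ n ih =>
      intro i hi
      have hin : n < m := hi ▸ i.isLt
      have h2 := congrArg (fun w : V => (N x ^ (m - 1 - n)) w) hc
      simp only [map_sum, map_smul, map_zero] at h2
      have hpow : ∀ j : Fin m, (N x ^ (m - 1 - n)) ((N x ^ (j : ℕ)) v)
          = (N x ^ (m - 1 - n + (j : ℕ))) v := fun j => by
        rw [← Module.End.mul_apply, ← pow_add]
      simp only [hpow] at h2
      have h3 : ∑ j : Fin m, c j • (N x ^ (m - 1 - n + (j : ℕ))) v
          = c i • (N x ^ (m - 1)) v := by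
        rw [Finset.sum_eq_single i]
        · have he : m - 1 - n + n = m - 1 := by omega
          rw [hi, he]
        · intro j _ hj
          have hjn : (j : ℕ) ≠ n := fun hh => hj (Fin.ext (by omega))
          rcases lt_or_gt_of_ne hjn with hlt | hgt
          · rw [ih (j : ℕ) hlt j rfl, zero_smul]
          · have hmle : m ≤ m - 1 - n + (j : ℕ) := by omega
            rw [pow_eq_zero_of_le hmle hNm, LinearMap.zero_apply, smul_zero]
        · intro hnotmem
          exact absurd (Finset.mem_univ i) hnotmem
      rw [h3] at h2
      rcases smul_eq_zero.mp h2 with h | h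
      · exact h
      · exact absurd h hv
  have hcard : Fintype.card (Fin m) = finrank F V := by simp [hm]
  let b := basisOfLinearIndependentOfCardEqFinrank li hcard
  have hb : ∀ i : Fin m, b i = (N x ^ (i : ℕ)) v := fun i => by
    simp only [b, coe_basisOfLinearIndependentOfCardEqFinrank]
  refine ⟨x, α x, hα x, hne, ?_⟩
  intro y
  set u := toEnd F g V x with hu
  set c : Fin m → F := fun i => b.repr (N y v) i with hcdef
  set p : Polynomial F := ∑ i : Fin m, Polynomial.C (c i) * Polynomial.X ^ (i : ℕ) with hp
  refine ⟨Polynomial.C (α y) + p.comp (Polynomial.X - Polynomial.C (α x)), ?_⟩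
  have key1 : Polynomial.aeval u (Polynomial.X - Polynomial.C (α x)) = N x := by
    rw [map_sub, Polynomial.aeval_X, Polynomial.aeval_C, Module.algebraMap_end_eq_smul_id]
    rfl
  have key2 : Polynomial.aeval u (p.comp (Polynomial.X - Polynomial.C (α x)))
      = Polynomial.aeval (N x) p := by
    rw [Polynomial.aeval_comp, key1]
  have hcN : Commute (N x) (Polynomial.aeval (N x) p) := by
    have h := (Commute.all (Polynomial.X - Polynomial.C (α x))
      (p.comp (Polynomial.X - Polynomial.C (α x)))).map (Polynomial.aeval u)
    rwa [key1, key2] at h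
  have key3 : Polynomial.aeval u (Polynomial.C (α y) + p.comp (Polynomial.X - Polynomial.C (α x)))
      = α y • 1 + Polynomial.aeval (N x) p := by
    rw [map_add, Polynomial.aeval_C, key2, Module.algebraMap_end_eq_smul_id]
    rfl
  have hpv : (Polynomial.aeval (N x) p) v = N y v := by
    have hsum := b.sum_repr (N y v)
    calc (Polynomial.aeval (N x) p) v
        = ∑ i : Fin m, c i • (N x ^ (i : ℕ)) v := by
          rw [hp, map_sum, LinearMap.sum_apply]
          refine Finset.sum_congr rfl fun i _ => ?_
          rw [map_mul, Polynomial.aeval_C, map_pow, Polynomial.aeval_X,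
            Module.End.mul_apply, Module.algebraMap_end_eq_smul_id]
          simp
      _ = N y v := by
          rw [← hsum]
          exact Finset.sum_congr rfl fun i _ => by rw [hb i]
  rw [key3]
  refine b.ext fun i => ?_
  rw [hb i]
  have hl : toEnd F g V y ((N x ^ (i : ℕ)) v) = (N x ^ (i : ℕ)) (toEnd F g V y v) := by
    rw [← Module.End.mul_apply, ← Module.End.mul_apply, ((hTN x y).pow_right (i : ℕ)).eq]
  have hr : (α y • 1 + Polynomial.aeval (N x) p) ((N x ^ (i : ℕ)) v)
      = (N x ^ (i : ℕ)) (α y • v + (Polynomial.aeval (N x) p) v) := by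
    rw [LinearMap.add_apply, map_add]
    congr 1
    · rw [map_smul]
      simp
    · rw [← Module.End.mul_apply, ← Module.End.mul_apply, (hcN.symm.pow_right (i : ℕ)).eq]
  rw [hl, hr]
  congr 1
  rw [hpv, hN]
  simp only [LinearMap.sub_apply, LinearMap.smul_apply, Module.End.one_apply]
  abel
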